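/- Consider the block-decomposed consensus dynamics ẋ_L = −(L₁₁)x_L, ẋ_F = −L₂₂ x_F − L₂₁ x_L, where the full Laplacian L = [[L₁₁, 0],[L₂₁, L₂₂]] satisfies L·1_n = 0, L₂₂ is nonsingular and Hurwitz-stable (−L₂₂ has eigenvalues with negative real part), and x_L(t) converges to the average (1/m)·1_m 1_mᵀ x_L(0). Then lim_{t→∞} x_F(t) = (1/m)·1_{n−m} 1_mᵀ x_L(0), i.e., all followers converge to the average of the first m agents' initial states. -/

import Mathlib

open Matrix Filter NormedSpace

attribute [local instance] Matrix.linftyOpNormedAddCommGroup Matrix.linftyOpNormedRing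
  Matrix.linftyOpNormedAlgebra

namespace ConsensusAux

variable {k : ℕ}

/-- `mulVec` by a fixed matrix, as a continuous linear map on vectors. -/
noncomputable def mvCLM (𝕜 : Type*) [RCLike 𝕜] {m k : ℕ}
    (M : Matrix (Fin k) (Fin m) 𝕜) : (Fin m → 𝕜) →L[𝕜] (Fin k → 𝕜) :=
  LinearMap.toContinuousLinearMap M.mulVecLin

@[simp] lemma mvCLM_apply (𝕜 : Type*) [RCLike 𝕜] {m k : ℕ}
    (M : Matrix (Fin k) (Fin m) 𝕜) (v : Fin m → 𝕜) :
    mvCLM 𝕜 M v = M.mulVec v := rfl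

/-- `mulVec` applied to a fixed vector, as a continuous linear map in the matrix. -/
noncomputable def mvVecCLM (𝕜 : Type*) [RCLike 𝕜] {k : ℕ}
    (v : Fin k → 𝕜) : Matrix (Fin k) (Fin k) 𝕜 →L[𝕜] (Fin k → 𝕜) :=
  LinearMap.toContinuousLinearMap
    { toFun := fun M => M.mulVec v
      map_add' := fun M N => Matrix.add_mulVec M N v
      map_smul' := fun c M => (Matrix.smul_mulVec c M v) }

@[simp] lemma mvVecCLM_apply (𝕜 : Type*) [RCLike 𝕜] {k : ℕ}
    (v : Fin k → 𝕜) (M : Matrix (Fin k) (Fin k) 𝕜) :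
    mvVecCLM 𝕜 v M = M.mulVec v := rfl

/-- `mvCLM` as a continuous linear map in the matrix argument. -/
noncomputable def mvv {k : ℕ} :
    Matrix (Fin k) (Fin k) ℝ →L[ℝ] ((Fin k → ℝ) →L[ℝ] (Fin k → ℝ)) :=
  LinearMap.toContinuousLinearMap
    { toFun := fun M => mvCLM ℝ M
      map_add' := fun M N => by
        ext v i
        simp [Matrix.add_mulVec]
      map_smul' := fun c M => by
        ext v i
        simp [Matrix.smul_mulVec] }

@[simp] lemma mvv_apply {k : ℕ} (M : Matrix (Fin k) (Fin k) ℝ) (v : Fin k → ℝ) :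
    mvv M v = M.mulVec v := rfl

/-- Pointwise decay of the matrix exponential over ℂ, given the Hurwitz condition. -/
lemma exp_mulVec_tendsto_zero (A : Matrix (Fin k) (Fin k) ℂ)
    (hH : ∀ (μ : ℂ) (v : Fin k → ℂ), v ≠ 0 → A.mulVec v = μ • v → 0 < μ.re)
    (v : Fin k → ℂ) :
    Tendsto (fun t : ℝ => (exp ((t : ℂ) • (-A))).mulVec v) atTop (nhds 0) := by
  classical
  set f : Module.End ℂ (Fin k → ℂ) := Matrix.toLinAlgEquiv' A with hf
  have hv : v ∈ ⨆ μ, f.maxGenEigenspace μ := by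
    rw [Module.End.iSup_maxGenEigenspace_eq_top]; trivial
  refine Submodule.iSup_induction (motive := fun x => Tendsto
    (fun t : ℝ => (exp ((t : ℂ) • (-A))).mulVec x) atTop (nhds 0)) _ hv ?_ ?_ ?_
  · -- generalized eigenvector case
    intro μ w hw
    rcases eq_or_ne w 0 with rfl | hw0
    · exact (tendsto_const_nhds : Tendsto (fun _ : ℝ => (0 : Fin k → ℂ)) atTop
        (nhds 0)).congr fun t => by rw [Matrix.mulVec_zero]
    obtain ⟨d, hd⟩ := Module.End.mem_maxGenEigenspace f μ w |>.mp hw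
    -- the eigenvalue has positive real part
    have hμ : 0 < μ.re := by
      have hne : f.HasGenEigenvalue μ d := by
        refine Submodule.ne_bot_iff _ |>.mpr ⟨w, ?_, hw0⟩
        exact Module.End.mem_genEigenspace_nat.mpr (LinearMap.mem_ker.mpr hd)
      obtain ⟨u, hu⟩ :=
        (Module.End.hasEigenvalue_of_hasGenEigenvalue hne).exists_hasEigenvector
      refine hH μ u hu.right ?_
      have := hu.apply_eq_smul
      simpa [hf, Matrix.toLinAlgEquiv'_apply] using this
    -- matrix nilpotency on w
    set N : Matrix (Fin k) (Fin k) ℂ := μ • 1 - A with hN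
    have hdvec : ((A - μ • 1) ^ d).mulVec w = 0 := by
      have he1 : f - μ • 1 = Matrix.toLinAlgEquiv' (A - μ • 1) := by
        rw [hf, map_sub]
        congr 1
        rw [_root_.map_smul, _root_.map_one]
      have he : (f - μ • 1) ^ d
          = Matrix.toLinAlgEquiv' ((A - μ • (1:Matrix (Fin k) (Fin k) ℂ)) ^ d) := by
        rw [he1, map_pow]
      have h2 := hd
      rw [he] at h2
      simp only [Matrix.toLinAlgEquiv'_apply, Matrix.mulVecLin_apply] at h2
      exact h2
    have hNdvec : (N ^ d).mulVec w = 0 := by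
      have : N ^ d = (-1) ^ d * (A - μ • 1) ^ d := by
        rw [hN, ← neg_sub A (μ • 1), neg_pow]
      rw [this, ← Matrix.mulVec_mulVec, hdvec, Matrix.mulVec_zero]
    have hNpow : ∀ n, d ≤ n → (N ^ n).mulVec w = 0 := by
      intro n hn
      have : N ^ n = N ^ (n - d) * N ^ d := by rw [← pow_add]; congr 1; omega
      rw [this, ← Matrix.mulVec_mulVec, hNdvec, Matrix.mulVec_zero]
    -- splitting of the exponential
    have hexp : ∀ t : ℝ, exp ((t:ℂ) • (-A))
        = Complex.exp (-(t * μ)) • exp ((t:ℂ) • N) := by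
      intro t
      have hsplit : (t:ℂ) • (-A) = (-(t * μ)) • (1 : Matrix (Fin k) (Fin k) ℂ) + (t:ℂ) • N := by
        rw [hN]; module
      have hcomm : Commute ((-(t * μ)) • (1 : Matrix (Fin k) (Fin k) ℂ)) ((t:ℂ) • N) :=
        ((Commute.one_left N).smul_left _).smul_right _
      rw [hsplit, Matrix.exp_add_of_commute _ _ hcomm]
      have h1 : ((-(t * μ)) • (1 : Matrix (Fin k) (Fin k) ℂ))
          = algebraMap ℂ (Matrix (Fin k) (Fin k) ℂ) (-(t * μ)) :=
        (Algebra.algebraMap_eq_smul_one _).symm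
      have h2 : exp (algebraMap ℂ (Matrix (Fin k) (Fin k) ℂ) (-(t * μ)))
          = algebraMap ℂ (Matrix (Fin k) (Fin k) ℂ) (exp (-(t * μ))) :=
        (algebraMap_exp_comm _).symm
      rw [h1, h2, Algebra.algebraMap_eq_smul_one, smul_mul_assoc, one_mul,
        Complex.exp_eq_exp_ℂ]
    -- the exponential of the nilpotent part applied to w is a finite sum
    have hexpN : ∀ t : ℝ, (exp ((t:ℂ) • N)).mulVec w
        = ∑ n ∈ Finset.range d, (((n.factorial : ℂ))⁻¹ * (t:ℂ)^n) • ((N ^ n).mulVec w) := by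
      intro t
      have hsum : Summable (fun n : ℕ => ((n.factorial : ℂ))⁻¹ • ((t:ℂ) • N) ^ n) :=
        expSeries_summable' _
      rw [exp_eq_tsum ℂ, ← mvVecCLM_apply ℂ w, ContinuousLinearMap.map_tsum _ hsum]
      rw [tsum_eq_sum (s := Finset.range d) ?_]
      · refine Finset.sum_congr rfl fun n _ => ?_
        simp only [mvVecCLM_apply, smul_pow, Matrix.smul_mulVec]
        rw [smul_smul]
      · intro n hn
        have hdn : d ≤ n := by
          by_contra h
          exact hn (Finset.mem_range.mpr (by omega))
        simp [smul_pow, Matrix.smul_mulVec, hNpow n hdn]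
    have key : ∀ t : ℝ, (exp ((t:ℂ) • (-A))).mulVec w
        = ∑ n ∈ Finset.range d,
            (Complex.exp (-(t * μ)) * (((n.factorial : ℂ))⁻¹ * (t:ℂ)^n)) • ((N ^ n).mulVec w) := by
      intro t
      rw [hexp t, Matrix.smul_mulVec, hexpN t, Finset.smul_sum]
      refine Finset.sum_congr rfl fun n _ => ?_
      rw [smul_smul]
    have hlim : Tendsto (fun t : ℝ => ∑ n ∈ Finset.range d,
        (Complex.exp (-(t * μ)) * (((n.factorial : ℂ))⁻¹ * (t:ℂ)^n)) • ((N ^ n).mulVec w))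
        atTop (nhds 0) := by
      have h0 : (0 : Fin k → ℂ) = ∑ n ∈ Finset.range d, (0 : Fin k → ℂ) := by simp
      rw [h0]
      refine tendsto_finset_sum _ fun n _ => ?_
      have hscal : Tendsto
          (fun t : ℝ => Complex.exp (-(t * μ)) * (((n.factorial : ℂ))⁻¹ * (t:ℂ)^n))
          atTop (nhds 0) := by
        rw [tendsto_zero_iff_norm_tendsto_zero]
        have hcomp : Tendsto (fun t : ℝ => μ.re * t) atTop atTop :=
          Tendsto.const_mul_atTop hμ tendsto_id
        have h1 : Tendsto (fun t : ℝ =>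
            ((n.factorial : ℝ))⁻¹ / μ.re ^ n * ((μ.re * t) ^ n * Real.exp (-(μ.re * t))))
            atTop (nhds 0) := by
          have := ((Real.tendsto_pow_mul_exp_neg_atTop_nhds_zero n).comp hcomp).const_mul
            (((n.factorial : ℝ))⁻¹ / μ.re ^ n)
          simpa using this
        refine h1.congr' ?_
        filter_upwards [eventually_ge_atTop (0:ℝ)] with t ht
        have habs : ‖Complex.exp (-(↑t * μ)) * (((n.factorial : ℂ))⁻¹ * (t:ℂ)^n)‖
            = Real.exp (-(t * μ.re)) * (((n.factorial : ℝ))⁻¹ * t^n) := by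
          have hre2 : (-((t:ℂ) * μ)).re = -(t * μ.re) := by simp
          rw [norm_mul, Complex.norm_exp, hre2]
          congr 1
          rw [norm_mul, norm_inv, norm_pow]
          simp [abs_of_nonneg ht]
        rw [habs]
        have hre : μ.re ≠ 0 := ne_of_gt hμ
        field_simp
        ring_nf
      simpa using hscal.smul_const ((N ^ n).mulVec w)
    exact hlim.congr fun t => (key t).symm
  · simpa [Matrix.mulVec_zero] using (tendsto_const_nhds :
      Tendsto (fun _ : ℝ => (0 : Fin k → ℂ)) atTop (nhds 0))
  · intro x y hx hy
    have := hx.add hy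
    simp only [add_zero] at this
    exact this.congr fun t => by rw [Matrix.mulVec_add]

/-- Norm decay of the real matrix exponential. -/
lemma exp_tendsto_zero (A : Matrix (Fin k) (Fin k) ℝ)
    (hH : ∀ (μ : ℂ) (v : Fin k → ℂ), v ≠ 0 →
      (A.map Complex.ofReal).mulVec v = μ • v → 0 < μ.re) :
    Tendsto (fun t : ℝ => exp (t • (-A))) atTop (nhds 0) := by
  classical
  set Ac : Matrix (Fin k) (Fin k) ℂ := A.map Complex.ofReal with hAc
  have hmap : ∀ t : ℝ, (exp (t • (-A))).map Complex.ofReal = exp ((t:ℂ) • (-Ac)) := by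
    intro t
    have hcont : Continuous (Complex.ofRealHom.mapMatrix :
        Matrix (Fin k) (Fin k) ℝ →+* Matrix (Fin k) (Fin k) ℂ) :=
      continuous_id.matrix_map Complex.continuous_ofReal
    have h1 : (exp (t • (-A))).map Complex.ofReal
        = Complex.ofRealHom.mapMatrix (exp (t • (-A))) := rfl
    rw [h1]
    refine (map_exp (Complex.ofRealHom.mapMatrix :
      Matrix (Fin k) (Fin k) ℝ →+* Matrix (Fin k) (Fin k) ℂ) hcont _).trans ?_
    congr 1
    ext i j
    simp [hAc, RingHom.mapMatrix_apply]
  have hentry : ∀ i j, Tendsto (fun t : ℝ => ‖exp (t • (-A)) i j‖) atTop (nhds 0) := by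
    intro i j
    have h1 := exp_mulVec_tendsto_zero Ac hH (Pi.single j 1)
    have h2 : Tendsto (fun t : ℝ => (exp ((t:ℂ) • (-Ac))).mulVec (Pi.single j 1) i)
        atTop (nhds 0) := by
      have := ((continuous_apply i).tendsto (0 : Fin k → ℂ)).comp h1
      simpa [Function.comp_def, Matrix.col, Matrix.transpose_apply] using this
    have h3 : ∀ t : ℝ, (exp ((t:ℂ) • (-Ac))).mulVec (Pi.single j 1) i
        = ((exp (t • (-A))) i j : ℂ) := by
      intro t
      rw [← hmap t, Matrix.mulVec_single]
      simp [Matrix.map_apply]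
    have h4 : Tendsto (fun t : ℝ => (((exp (t • (-A))) i j : ℝ) : ℂ)) atTop (nhds 0) := by
      refine h2.congr fun t => h3 t
    have := h4.norm
    simpa using this
  have hb : ∀ (M : Matrix (Fin k) (Fin k) ℝ), ‖M‖ ≤ ∑ i, ∑ j, ‖M i j‖ := by
    intro M
    rw [Matrix.linfty_opNorm_def]
    have h1 : ((Finset.univ : Finset (Fin k)).sup fun i => ∑ j, ‖M i j‖₊)
        ≤ ∑ i, ∑ j, ‖M i j‖₊ :=
      Finset.sup_le fun i _ => Finset.single_le_sum
        (f := fun i => ∑ j, ‖M i j‖₊) (fun _ _ => zero_le') (Finset.mem_univ i)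
    calc (((Finset.univ : Finset (Fin k)).sup fun i => ∑ j, ‖M i j‖₊ : NNReal) : ℝ)
        ≤ ((∑ i, ∑ j, ‖M i j‖₊ : NNReal) : ℝ) := by exact_mod_cast h1
      _ = ∑ i, ∑ j, ‖M i j‖ := by push_cast; rfl
  have hsum : Tendsto (fun t : ℝ => ∑ i, ∑ j, ‖exp (t • (-A)) i j‖) atTop (nhds 0) := by
    have h0 : (0:ℝ) = ∑ _i : Fin k, ∑ _j : Fin k, (0:ℝ) := by simp
    rw [h0]
    exact tendsto_finset_sum _ fun i _ => tendsto_finset_sum _ fun j _ => hentry i j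
  exact squeeze_zero_norm (fun t => hb _) hsum

/-- Exponential decay bound. -/
lemma exp_decay (A : Matrix (Fin k) (Fin k) ℝ)
    (hH : ∀ (μ : ℂ) (v : Fin k → ℂ), v ≠ 0 →
      (A.map Complex.ofReal).mulVec v = μ • v → 0 < μ.re) :
    ∃ C > (0:ℝ), ∃ α > (0:ℝ), ∀ t : ℝ, 0 ≤ t →
      ‖exp (t • (-A))‖ ≤ C * Real.exp (-α * t) := by
  classical
  obtain ⟨T, hT, hhalf⟩ : ∃ T : ℝ, 0 < T ∧ ‖exp (T • (-A))‖ ≤ 1/2 := by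
    have h2 := (NormedAddCommGroup.tendsto_nhds_zero.mp (exp_tendsto_zero A hH))
      (1/2) (by norm_num)
    rw [eventually_atTop] at h2
    obtain ⟨T0, hT0⟩ := h2
    exact ⟨max T0 1, lt_of_lt_of_le one_pos (le_max_right _ _),
      (hT0 _ (le_max_left _ _)).le⟩
  have hφcont : Continuous (fun τ : ℝ => exp (τ • (-A))) :=
    exp_continuous.comp (continuous_id.smul continuous_const)
  obtain ⟨M0, hM0⟩ := (isCompact_Icc (a := (0:ℝ)) (b := T)).exists_bound_of_continuousOn
    hφcont.continuousOn
  set M : ℝ := max M0 1 with hMdef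
  have hM1 : (1:ℝ) ≤ M := le_max_right _ _
  have hM : ∀ τ ∈ Set.Icc (0:ℝ) T, ‖exp (τ • (-A))‖ ≤ M :=
    fun τ hτ => (hM0 τ hτ).trans (le_max_left _ _)
  have claim : ∀ n : ℕ, ∀ r ∈ Set.Icc (0:ℝ) T, ‖exp ((r + n * T) • (-A))‖ ≤ M * (1/2)^n := by
    intro n
    induction n with
    | zero => intro r hr; simpa using hM r hr
    | succ n ih =>
      intro r hr
      push_cast
      have hsplit : (r + (n+1) * T) • (-A) = (r + n * T) • (-A) + T • (-A) := by module
      have hcomm : Commute ((r + n * T) • (-A)) (T • (-A)) :=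
        ((Commute.refl (-A)).smul_left _).smul_right _
      have : exp ((r + (n+1) * T) • (-A))
          = exp ((r + n * T) • (-A)) * exp (T • (-A)) := by
        rw [hsplit, Matrix.exp_add_of_commute _ _ hcomm]
      rw [this]
      calc ‖exp ((r + n * T) • (-A)) * exp (T • (-A))‖
          ≤ ‖exp ((r + n * T) • (-A))‖ * ‖exp (T • (-A))‖ := norm_mul_le _ _
        _ ≤ (M * (1/2)^n) * (1/2) := by
            refine mul_le_mul (by exact_mod_cast ih r hr) hhalf (norm_nonneg _) ?_
            positivity
        _ = M * (1/2)^(n+1) := by ring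
  refine ⟨2 * M, by linarith, Real.log 2 / T, by positivity, fun t ht => ?_⟩
  set n : ℕ := ⌊t / T⌋₊ with hn
  have hnle : (n : ℝ) * T ≤ t := by
    rw [hn]
    have h1 : (⌊t / T⌋₊ : ℝ) ≤ t / T := Nat.floor_le (by positivity)
    calc (⌊t / T⌋₊ : ℝ) * T ≤ (t / T) * T := by nlinarith
      _ = t := by field_simp
  have hlt : t < ((n:ℝ) + 1) * T := by
    have h1 : t / T < (n:ℝ) + 1 := Nat.lt_floor_add_one _
    calc t = (t / T) * T := by field_simp
      _ < ((n:ℝ) + 1) * T := by nlinarith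
  set r : ℝ := t - n * T with hr
  have hrIcc : r ∈ Set.Icc (0:ℝ) T := by
    constructor
    · simp only [hr]; linarith
    · simp only [hr]; nlinarith
  have h1 : ‖exp (t • (-A))‖ ≤ M * (1/2)^n := by
    have := claim n r hrIcc
    rw [show r + n * T = t by rw [hr]; ring] at this
    exact this
  have h2 : M * (1/2:ℝ)^n ≤ 2 * M * Real.exp (-(Real.log 2 / T) * t) := by
    have hhalfpow : (1/2:ℝ)^n = Real.exp (-(n : ℝ) * Real.log 2) := by
      rw [← Real.exp_log (show (0:ℝ) < 1/2 by norm_num)]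
      rw [← Real.exp_nat_mul]
      congr 1
      rw [show Real.log (1/2) = - Real.log 2 by
        rw [one_div, Real.log_inv]]
      ring
    have hexple : Real.exp (-((n:ℝ)+1) * Real.log 2) ≤ Real.exp (-(Real.log 2 / T) * t) := by
      apply Real.exp_le_exp.mpr
      have hlog : 0 ≤ Real.log 2 := Real.log_nonneg (by norm_num)
      have h4 : Real.log 2 / T * t ≤ ((n:ℝ)+1) * Real.log 2 := by
        rw [div_mul_eq_mul_div, div_le_iff₀ hT]
        nlinarith
      have h5 : -(Real.log 2 / T) * t = -(Real.log 2 / T * t) := by ring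
      rw [h5]
      linarith
    calc M * (1/2:ℝ)^n = 2 * M * ((1/2) * (1/2)^n) := by ring
      _ = 2 * M * Real.exp (-((n:ℝ)+1) * Real.log 2) := by
          rw [hhalfpow, ← Real.exp_log (show (0:ℝ) < 1/2 by norm_num)]
          rw [← Real.exp_add]
          congr 1
          rw [show Real.log (1/2) = - Real.log 2 by rw [one_div, Real.log_inv]]
          ring
      _ ≤ 2 * M * Real.exp (-(Real.log 2 / T) * t) := by
          have h2M : (0:ℝ) ≤ 2 * M := by linarith
          exact mul_le_mul_of_nonneg_left hexple h2M
  linarith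

/-- Input-to-state stability: a linear system with Hurwitz matrix and vanishing input
has vanishing state. -/
lemma iss (A : Matrix (Fin k) (Fin k) ℝ) {C α : ℝ} (hC : 0 < C) (hα : 0 < α)
    (hdecay : ∀ t : ℝ, 0 ≤ t → ‖exp (t • (-A))‖ ≤ C * Real.exp (-α * t))
    (g : ℝ → Fin k → ℝ) (hg : Continuous g) (hgto : Tendsto g atTop (nhds 0))
    (X : ℝ → Fin k → ℝ) (hX : ∀ t, HasDerivAt X (-(A.mulVec (X t)) + g t) t) :
    Tendsto X atTop (nhds 0) := by
  classical
  have hΨΦ : ∀ t : ℝ, exp (t • (-A)) * exp (t • A) = 1 := by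
    intro t
    have hcomm : Commute (t • (-A)) (t • A) :=
      (((Commute.refl A).neg_left).smul_left t).smul_right t
    rw [← Matrix.exp_add_of_commute _ _ hcomm,
      show t • (-A) + t • A = (0 : Matrix (Fin k) (Fin k) ℝ) by module, exp_zero]
  have hmulΦ : ∀ t s : ℝ, exp (t • (-A)) * exp (s • A) = exp ((t - s) • (-A)) := by
    intro t s
    have hcomm : Commute (t • (-A)) (s • A) :=
      (((Commute.refl A).neg_left).smul_left t).smul_right s
    rw [← Matrix.exp_add_of_commute _ _ hcomm]
    congr 1
    module
  have hY : ∀ t, HasDerivAt (fun τ => (exp (τ • A)).mulVec (X τ))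
      ((exp (t • A)).mulVec (g t)) t := by
    intro t
    have hc : HasDerivAt (fun τ => mvv (exp (τ • A))) (mvv (exp (t • A) * A)) t :=
      mvv.hasFDerivAt.comp_hasDerivAt t (hasDerivAt_exp_smul_const A t)
    have h := hc.clm_apply (hX t)
    refine h.congr_deriv ?_
    simp only [mvv_apply]
    rw [← Matrix.mulVec_mulVec, Matrix.mulVec_add, Matrix.mulVec_neg]
    abel
  have hΨg_cont : Continuous fun s : ℝ => (exp (s • A)).mulVec (g s) :=
    (exp_continuous.comp (continuous_id.smul continuous_const)).matrix_mulVec hg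
  have hFTC : ∀ t : ℝ, (exp (t • A)).mulVec (X t)
      = X 0 + ∫ s in (0:ℝ)..t, (exp (s • A)).mulVec (g s) := by
    intro t
    have h := intervalIntegral.integral_eq_sub_of_hasDerivAt
      (f := fun τ => (exp (τ • A)).mulVec (X τ))
      (f' := fun τ => (exp (τ • A)).mulVec (g τ))
      (fun s _ => hY s) (hΨg_cont.intervalIntegrable 0 t)
    have h0 : (exp ((0:ℝ) • A)).mulVec (X 0) = X 0 := by
      rw [zero_smul, exp_zero, Matrix.one_mulVec]
    simp only [h0] at h
    rw [eq_sub_iff_add_eq] at h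
    rw [← h]
    abel
  rw [NormedAddCommGroup.tendsto_nhds_zero]
  intro ε hε
  set δ : ℝ := ε * α / (4 * C) with hδdef
  have hδ : 0 < δ := by positivity
  obtain ⟨T1, hT1⟩ := eventually_atTop.mp (NormedAddCommGroup.tendsto_nhds_zero.mp hgto δ hδ)
  set T : ℝ := max T1 0 with hTdef
  have hT0 : (0:ℝ) ≤ T := le_max_right _ _
  have hTg : ∀ s, T ≤ s → ‖g s‖ ≤ δ :=
    fun s hs => (hT1 s (le_trans (le_max_left _ _) hs)).le
  set Z : Fin k → ℝ := X 0 + ∫ s in (0:ℝ)..T, (exp (s • A)).mulVec (g s) with hZ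
  have hrep : ∀ t : ℝ, X t = (exp (t • (-A))).mulVec Z
      + ∫ s in T..t, (exp ((t - s) • (-A))).mulVec (g s) := by
    intro t
    have hXt : X t = (exp (t • (-A))).mulVec ((exp (t • A)).mulVec (X t)) := by
      rw [Matrix.mulVec_mulVec, hΨΦ t, Matrix.one_mulVec]
    rw [hXt, hFTC t, ← intervalIntegral.integral_add_adjacent_intervals
      (hΨg_cont.intervalIntegrable 0 T) (hΨg_cont.intervalIntegrable T t)]
    rw [show X 0 + ((∫ s in (0:ℝ)..T, (exp (s • A)).mulVec (g s))
        + ∫ s in T..t, (exp (s • A)).mulVec (g s))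
        = Z + ∫ s in T..t, (exp (s • A)).mulVec (g s) by rw [hZ]; abel]
    rw [Matrix.mulVec_add]
    congr 1
    rw [← mvCLM_apply ℝ (exp (t • (-A))),
      ← ContinuousLinearMap.intervalIntegral_comp_comm _ (hΨg_cont.intervalIntegrable T t)]
    refine intervalIntegral.integral_congr fun s _ => ?_
    rw [mvCLM_apply, Matrix.mulVec_mulVec, hmulΦ t s]
  have h1 : Tendsto (fun t : ℝ => (exp (t • (-A))).mulVec Z) atTop (nhds 0) := by
    have hbound : ∀ᶠ t in atTop, ‖(exp (t • (-A))).mulVec Z‖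
        ≤ (C * ‖Z‖) * Real.exp (-α * t) := by
      filter_upwards [eventually_ge_atTop (0:ℝ)] with t ht
      calc ‖(exp (t • (-A))).mulVec Z‖
          ≤ ‖exp (t • (-A))‖ * ‖Z‖ := Matrix.linfty_opNorm_mulVec _ _
        _ ≤ (C * Real.exp (-α * t)) * ‖Z‖ :=
            mul_le_mul_of_nonneg_right (hdecay t ht) (norm_nonneg _)
        _ = (C * ‖Z‖) * Real.exp (-α * t) := by ring
    have hgl : Tendsto (fun t : ℝ => (C * ‖Z‖) * Real.exp (-α * t)) atTop (nhds 0) := by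
      have hexp0 : Tendsto (fun t : ℝ => Real.exp (-α * t)) atTop (nhds 0) := by
        have hcomp : Tendsto (fun t : ℝ => α * t) atTop atTop :=
          Tendsto.const_mul_atTop hα tendsto_id
        have := Real.tendsto_exp_neg_atTop_nhds_zero.comp hcomp
        refine this.congr fun t => by simp [Function.comp, neg_mul]
      simpa using hexp0.const_mul (C * ‖Z‖)
    exact squeeze_zero_norm' hbound hgl
  have h2 : ∀ t : ℝ, T ≤ t →
      ‖∫ s in T..t, (exp ((t - s) • (-A))).mulVec (g s)‖ ≤ ε / 4 := by
    intro t ht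
    have hcont2 : Continuous fun s : ℝ => (exp ((t - s) • (-A))).mulVec (g s) :=
      (exp_continuous.comp
        ((continuous_const.sub continuous_id).smul continuous_const)).matrix_mulVec hg
    have hcont3 : Continuous fun s : ℝ => C * δ * Real.exp (-α * (t - s)) :=
      continuous_const.mul (Real.continuous_exp.comp
        ((continuous_const.mul (continuous_const.sub continuous_id))))
    calc ‖∫ s in T..t, (exp ((t - s) • (-A))).mulVec (g s)‖
        ≤ ∫ s in T..t, ‖(exp ((t - s) • (-A))).mulVec (g s)‖ :=
          intervalIntegral.norm_integral_le_integral_norm ht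
      _ ≤ ∫ s in T..t, C * δ * Real.exp (-α * (t - s)) := by
          apply intervalIntegral.integral_mono_on ht
            (hcont2.norm.intervalIntegrable _ _) (hcont3.intervalIntegrable _ _)
          intro s hs
          calc ‖(exp ((t - s) • (-A))).mulVec (g s)‖
              ≤ ‖exp ((t - s) • (-A))‖ * ‖g s‖ := Matrix.linfty_opNorm_mulVec _ _
            _ ≤ (C * Real.exp (-α * (t - s))) * δ := by
                apply mul_le_mul (hdecay _ (by linarith [hs.1, hs.2])) (hTg s hs.1)
                  (norm_nonneg _) (by positivity)
            _ = C * δ * Real.exp (-α * (t - s)) := by ring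
      _ ≤ ε / 4 := by
          have hanti : ∀ s : ℝ, HasDerivAt (fun u : ℝ => Real.exp (-α * (t - u)) / α)
              (Real.exp (-α * (t - s))) s := by
            intro s
            have hinner : HasDerivAt (fun u : ℝ => -α * (t - u)) α s := by
              have := ((hasDerivAt_id s).const_sub t).const_mul (-α)
              simpa using this
            have hcompd := (Real.hasDerivAt_exp (-α * (t - s))).comp s hinner
            have h3 := hcompd.div_const α
            simpa [Function.comp, mul_div_assoc, div_self hα.ne', mul_one] using h3
          have hint : (∫ s in T..t, Real.exp (-α * (t - s)))
              = Real.exp (-α * (t - t)) / α - Real.exp (-α * (t - T)) / α :=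
            intervalIntegral.integral_eq_sub_of_hasDerivAt (fun s _ => hanti s)
              ((Real.continuous_exp.comp
                ((continuous_const.mul (continuous_const.sub continuous_id)))).intervalIntegrable _ _)
          rw [intervalIntegral.integral_const_mul, hint]
          have he1 : Real.exp (-α * (t - t)) = 1 := by simp
          have he2 : 0 < Real.exp (-α * (t - T)) := Real.exp_pos _
          have heq : C * δ * (1/α) = ε/4 := by
            rw [hδdef]
            field_simp
          rw [he1]
          have hmain : C * δ * (1 / α - Real.exp (-α * (t - T)) / α) ≤ C * δ * (1/α) := by
            apply mul_le_mul_of_nonneg_left _ (by positivity)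
            have : 0 ≤ Real.exp (-α * (t - T)) / α := by positivity
            linarith
          calc C * δ * (1 / α - Real.exp (-α * (t - T)) / α)
              ≤ C * δ * (1/α) := hmain
            _ = ε / 4 := heq
          -- note: goal shape may need `one_div`
  have hev1 : ∀ᶠ t in atTop, ‖(exp (t • (-A))).mulVec Z‖ < ε/2 :=
    (NormedAddCommGroup.tendsto_nhds_zero.mp h1) (ε/2) (by linarith)
  filter_upwards [hev1, eventually_ge_atTop T] with t h1t h2t
  rw [hrep t]
  calc ‖(exp (t • (-A))).mulVec Z
      + ∫ s in T..t, (exp ((t - s) • (-A))).mulVec (g s)‖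
      ≤ ‖(exp (t • (-A))).mulVec Z‖
        + ‖∫ s in T..t, (exp ((t - s) • (-A))).mulVec (g s)‖ := norm_add_le _ _
    _ < ε := by
        have := h2 t h2t
        linarith

end ConsensusAux

open ConsensusAux in
/-- follower convergence in the block-decomposed consensus
dynamics `ẋ_L = -L₁₁ x_L`, `ẋ_F = -L₂₂ x_F - L₂₁ x_L`.  If the full Laplacian
has zero row sums, `L₂₂` is nonsingular and Hurwitz-stable, and `x_L(t)` tends
to the average of its initial values, then `x_F(t)` tends to the same
average. -/
theorem followers_converge_to_leader_average
    {m k : ℕ} (hm : 0 < m)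
    (L11 : Matrix (Fin m) (Fin m) ℝ)
    (L21 : Matrix (Fin k) (Fin m) ℝ)
    (L22 : Matrix (Fin k) (Fin k) ℝ)
    -- zero row sums of the full Laplacian L = [[L11, 0], [L21, L22]]
    (hrow1 : L11.mulVec (fun _ => 1) = 0)
    (hrow2 : L21.mulVec (fun _ => 1) + L22.mulVec (fun _ => 1) = 0)
    -- L22 nonsingular
    (hinv : IsUnit L22.det)
    -- -L22 is Hurwitz: all complex eigenvalues of L22 have positive real part
    (hHurwitz : ∀ (μ : ℂ) (v : Fin k → ℂ), v ≠ 0 →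
      (L22.map Complex.ofReal).mulVec v = μ • v → 0 < μ.re)
    (xL : ℝ → Fin m → ℝ) (xF : ℝ → Fin k → ℝ)
    (hxL : ∀ t, HasDerivAt xL (-(L11.mulVec (xL t))) t)
    (hxF : ∀ t, HasDerivAt xF (-(L22.mulVec (xF t)) - L21.mulVec (xL t)) t)
    -- the leader states converge to the average of their initial values
    (hLconv : Tendsto xL atTop (nhds (fun _ => (∑ i, xL 0 i) / m))) :
    Tendsto xF atTop (nhds (fun _ => (∑ i, xL 0 i) / m)) := by
  classical
  set c : ℝ := (∑ i, xL 0 i) / m with hc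
  set W : Matrix (Fin k) (Fin m) ℝ := L22⁻¹ * L21 with hWdef
  have hL22W : L22 * W = L21 := by
    rw [hWdef, ← Matrix.mul_assoc, Matrix.mul_nonsing_inv _ hinv, Matrix.one_mul]
  have h21 : L21.mulVec (fun _ => 1) = -(L22.mulVec (fun _ => 1)) := by
    have := hrow2; linear_combination (norm := module) this
  have hW1 : W.mulVec (fun _ => 1) = -(fun _ => (1:ℝ)) := by
    rw [hWdef, ← Matrix.mulVec_mulVec, h21, Matrix.mulVec_neg, Matrix.mulVec_mulVec,
      Matrix.nonsing_inv_mul _ hinv, Matrix.one_mulVec]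
  -- the auxiliary variable X = x_F + W x_L
  set X : ℝ → Fin k → ℝ := fun t => xF t + W.mulVec (xL t) with hXdef
  set g : ℝ → Fin k → ℝ := fun t => -((W * L11).mulVec (xL t)) with hgdef
  have hxLcont : Continuous xL :=
    continuous_iff_continuousAt.2 fun t => (hxL t).continuousAt
  have hgcont : Continuous g := ((mvCLM ℝ (W * L11)).continuous.comp hxLcont).neg
  have hc1 : (fun _ : Fin m => c) = c • (fun _ : Fin m => (1:ℝ)) := by
    funext i; simp
  have hgto : Tendsto g atTop (nhds 0) := by
    have h1 : Tendsto (fun t => (W * L11).mulVec (xL t)) atTop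
        (nhds ((W * L11).mulVec (fun _ => c))) :=
      ((mvCLM ℝ (W * L11)).continuous.tendsto _).comp hLconv
    have h2 : (W * L11).mulVec (fun _ => c) = 0 := by
      rw [hc1, Matrix.mulVec_smul, ← Matrix.mulVec_mulVec, hrow1, Matrix.mulVec_zero,
        smul_zero]
    rw [hgdef]
    simpa [h2] using h1.neg
  have hXder : ∀ t, HasDerivAt X (-(L22.mulVec (X t)) + g t) t := by
    intro t
    have h2 : HasDerivAt (fun s => W.mulVec (xL s)) (W.mulVec (-(L11.mulVec (xL t)))) t := by
      have := ((mvCLM ℝ W).hasFDerivAt (x := xL t)).comp_hasDerivAt t (hxL t)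
      exact this
    have h3 := (hxF t).add h2
    refine h3.congr_deriv ?_
    rw [hXdef]
    simp only [Matrix.mulVec_add, Matrix.mulVec_mulVec, hL22W, Matrix.mulVec_neg, hgdef]
    module
  obtain ⟨C, hC, α, hα, hdecay⟩ := exp_decay L22 hHurwitz
  have hXto : Tendsto X atTop (nhds 0) := iss L22 hC hα hdecay g hgcont hgto X hXder
  have hWxL : Tendsto (fun t => W.mulVec (xL t)) atTop (nhds (fun _ => (-c : ℝ))) := by
    have h1 : Tendsto (fun t => W.mulVec (xL t)) atTop
        (nhds (W.mulVec (fun _ => c))) :=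
      ((mvCLM ℝ W).continuous.tendsto _).comp hLconv
    have h2 : W.mulVec (fun _ => c) = fun _ => (-c : ℝ) := by
      rw [hc1, Matrix.mulVec_smul, hW1]
      funext i; simp
    rwa [h2] at h1
  have : Tendsto xF atTop (nhds (0 - fun _ => (-c:ℝ))) := by
    have := hXto.sub hWxL
    refine this.congr fun t => ?_
    rw [hXdef]; module
  convert this using 2
  funext i
  simp
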